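/- arXiv:1801.03634 — 2 statements merged into one kernel-verified Lean document; each statement's English description precedes it below -/
import Mathlib

section
/- Let V : [0,1] → ℝ be the unique fixed point of the Bellman operator (T V)(π) = max{ (1−π)·r₁ + β·((1−π)·V(μ₁) + π·V(μ₀)), w + β·V(Γ(π)) } with Γ(π) = π·μ₀ + (1−π)·μ₁ and β ∈ (0,1). Then V is a convex function of π on [0,1]. -/
noncomputable def bellmanT (r1 w β μ0 μ1 : ℝ) (V : ℝ → ℝ) (π : ℝ) : ℝ :=
  max ((1 - π) * r1 + β * ((1 - π) * V μ1 + π * V μ0))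
      (w + β * V (π * μ0 + (1 - π) * μ1))

private lemma affine_convexOn (a b : ℝ) : ConvexOn ℝ Set.univ (fun x : ℝ => a + b * x) := by
  refine ⟨convex_univ, fun x _ y _ t s ht hs hts => ?_⟩
  simp only [smul_eq_mul]
  have : a + b * (t * x + s * y) = t * (a + b * x) + s * (a + b * y) := by
    linear_combination (-a) * hts
  linarith [this.le]

private lemma bellman_convex (r1 w β μ0 μ1 : ℝ) (hβ : 0 ≤ β) (f : ℝ → ℝ)
    (hf : ConvexOn ℝ Set.univ f) :
    ConvexOn ℝ Set.univ (bellmanT r1 w β μ0 μ1 f) := by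
  have h1 : ConvexOn ℝ Set.univ
      (fun π : ℝ => (1 - π) * r1 + β * ((1 - π) * f μ1 + π * f μ0)) := by
    have := affine_convexOn (r1 + β * f μ1) (β * f μ0 - β * f μ1 - r1)
    convert this using 2 with π
    ring
  have hΓ : ConvexOn ℝ Set.univ (fun π : ℝ => f (π * μ0 + (1 - π) * μ1)) := by
    refine ⟨convex_univ, fun x _ y _ t s ht hs hts => ?_⟩
    simp only [smul_eq_mul]
    have hz : (t * x + s * y) * μ0 + (1 - (t * x + s * y)) * μ1
        = t * (x * μ0 + (1 - x) * μ1) + s * (y * μ0 + (1 - y) * μ1) := by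
      linear_combination (-μ1) * hts
    rw [hz]
    have := hf.2 (Set.mem_univ (x * μ0 + (1 - x) * μ1))
      (Set.mem_univ (y * μ0 + (1 - y) * μ1)) ht hs hts
    simpa using this
  have h2 : ConvexOn ℝ Set.univ (fun π : ℝ => w + β * f (π * μ0 + (1 - π) * μ1)) :=
    (convexOn_const w convex_univ).add (hΓ.smul hβ)
  exact h1.sup h2

private lemma bellman_contract (r1 w β μ0 μ1 : ℝ) (hβ : 0 ≤ β)
    (hμ1 : μ1 ∈ Set.Icc (0:ℝ) 1) (hμ0 : μ0 ∈ Set.Icc (0:ℝ) 1)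
    (f g : ℝ → ℝ) (D : ℝ) (h : ∀ x ∈ Set.Icc (0:ℝ) 1, |f x - g x| ≤ D)
    (π : ℝ) (hπ : π ∈ Set.Icc (0:ℝ) 1) :
    |bellmanT r1 w β μ0 μ1 f π - bellmanT r1 w β μ0 μ1 g π| ≤ β * D := by
  obtain ⟨hπ0, hπ1⟩ := hπ
  have hΓ : π * μ0 + (1 - π) * μ1 ∈ Set.Icc (0:ℝ) 1 := by
    obtain ⟨h00, h01⟩ := hμ0
    obtain ⟨h10, h11⟩ := hμ1
    constructor <;> nlinarith
  have hA := abs_le.mp (h μ1 hμ1)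
  have hB := abs_le.mp (h μ0 hμ0)
  have hC := abs_le.mp (h _ hΓ)
  refine le_trans (abs_max_sub_max_le_max _ _ _ _) (max_le ?_ ?_)
  · rw [abs_le]
    constructor <;> nlinarith [mul_nonneg hβ hπ0, mul_nonneg hβ (sub_nonneg.mpr hπ1)]
  · have : (w + β * f (π * μ0 + (1 - π) * μ1)) - (w + β * g (π * μ0 + (1 - π) * μ1))
        = β * (f (π * μ0 + (1 - π) * μ1) - g (π * μ0 + (1 - π) * μ1)) := by ring
    rw [this, abs_le]
    constructor <;> nlinarith

theorem value_function_convex (r1 w β μ0 μ1 : ℝ) (V : ℝ → ℝ)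
    (hr : 0 ≤ r1) (hβ0 : 0 < β) (hβ1 : β < 1)
    (hμ1 : μ1 ∈ Set.Icc (0:ℝ) 1) (hμ0 : μ0 ∈ Set.Icc (0:ℝ) 1)
    (hbdd : ∃ C, ∀ π ∈ Set.Icc (0:ℝ) 1, |V π| ≤ C)
    (hfix : ∀ π ∈ Set.Icc (0:ℝ) 1, V π = bellmanT r1 w β μ0 μ1 V π) :
    ConvexOn ℝ (Set.Icc (0:ℝ) 1) V := by
  obtain ⟨C, hC⟩ := hbdd
  -- iterates starting from 0
  set W : ℕ → ℝ → ℝ := fun n => (fun f => bellmanT r1 w β μ0 μ1 f)^[n] (fun _ => 0) with hW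
  have hWsucc : ∀ n, W (n + 1) = bellmanT r1 w β μ0 μ1 (W n) := by
    intro n
    simp [hW, Function.iterate_succ_apply']
  have hWconv : ∀ n, ConvexOn ℝ Set.univ (W n) := by
    intro n
    induction n with
    | zero => exact convexOn_const 0 convex_univ
    | succ n ih =>
        rw [hWsucc n]
        exact bellman_convex r1 w β μ0 μ1 hβ0.le _ ih
  have hbound : ∀ n, ∀ π ∈ Set.Icc (0:ℝ) 1, |W n π - V π| ≤ β ^ n * C := by
    intro n
    induction n with
    | zero =>
        intro π hπ
        simpa [hW] using hC π hπ
    | succ n ih =>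
        intro π hπ
        have := bellman_contract r1 w β μ0 μ1 hβ0.le hμ1 hμ0 (W n) V (β ^ n * C) ih π hπ
        rw [hWsucc n]
        calc |bellmanT r1 w β μ0 μ1 (W n) π - V π|
            = |bellmanT r1 w β μ0 μ1 (W n) π - bellmanT r1 w β μ0 μ1 V π| := by
              rw [hfix π hπ]
          _ ≤ β * (β ^ n * C) := this
          _ = β ^ (n + 1) * C := by ring
  have hlim : ∀ π ∈ Set.Icc (0:ℝ) 1,
      Filter.Tendsto (fun n => W n π) Filter.atTop (nhds (V π)) := by
    intro π hπ
    have h0 : Filter.Tendsto (fun n : ℕ => β ^ n * C) Filter.atTop (nhds 0) := by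
      simpa using (tendsto_pow_atTop_nhds_zero_of_lt_one hβ0.le hβ1).mul_const C
    have : Filter.Tendsto (fun n => W n π - V π) Filter.atTop (nhds 0) :=
      squeeze_zero_norm (fun n => hbound n π hπ) h0
    have := this.add_const (V π)
    simpa using this
  refine ⟨convex_Icc 0 1, fun x hx y hy t s ht hs hts => ?_⟩
  have hz : t • x + s • y ∈ Set.Icc (0:ℝ) 1 := (convex_Icc 0 1) hx hy ht hs hts
  refine le_of_tendsto_of_tendsto' (hlim _ hz)
    (((hlim x hx).const_mul t).add ((hlim y hy).const_mul s)) (fun n => ?_)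
  have := (hWconv n).2 (Set.mem_univ x) (Set.mem_univ y) ht hs hts
  simpa [smul_eq_mul] using this
end

section
/- Let V be the unique fixed point of the Bellman operator above with μ₀ ≥ μ₁, β ∈ (0,1), r₁ > 0. Define V_T(π) = (1−π)·r₁ + β·((1−π)·V(μ₁) + π·V(μ₀)) and V_NT(π) = w + β·V(Γ(π)). Then the difference D(π) = V_T(π) − V_NT(π) is strictly decreasing in π on [0,1]. -/
theorem q_difference_strict_anti (r1 w β μ0 μ1 : ℝ) (V : ℝ → ℝ)
    (hr : 0 < r1) (hβ0 : 0 < β) (hβ1 : β < 1)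
    (hμ1 : μ1 ∈ Set.Icc (0:ℝ) 1) (hμ0 : μ0 ∈ Set.Icc (0:ℝ) 1) (hμ : μ1 ≤ μ0)
    (hbdd : ∃ C, ∀ π ∈ Set.Icc (0:ℝ) 1, |V π| ≤ C)
    (hfix : ∀ π ∈ Set.Icc (0:ℝ) 1, V π = bellmanT r1 w β μ0 μ1 V π) :
    StrictAntiOn (fun π : ℝ =>
      ((1 - π) * r1 + β * ((1 - π) * V μ1 + π * V μ0)) -
      (w + β * V (π * μ0 + (1 - π) * μ1))) (Set.Icc (0:ℝ) 1) := by
  obtain ⟨C0, hC0⟩ := hbdd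
  set C := max C0 0 with hCdef
  have hC : ∀ π ∈ Set.Icc (0:ℝ) 1, |V π| ≤ C :=
    fun π hπ => (hC0 π hπ).trans (le_max_left _ _)
  have hCnn : (0:ℝ) ≤ C := le_max_right _ _
  obtain ⟨hμ1l, hμ1r⟩ := hμ1
  obtain ⟨hμ0l, hμ0r⟩ := hμ0
  have hΓmem : ∀ π ∈ Set.Icc (0:ℝ) 1, π * μ0 + (1 - π) * μ1 ∈ Set.Icc (0:ℝ) 1 := by
    intro π hπ
    obtain ⟨h0, h1⟩ := hπ
    constructor
    · nlinarith
    · nlinarith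
  have hΓmono : ∀ a b : ℝ, a ≤ b → a * μ0 + (1 - a) * μ1 ≤ b * μ0 + (1 - b) * μ1 := by
    intro a b hab; nlinarith
  have hmaxsub : ∀ A1 A2 B1 B2 : ℝ, max A1 A2 - max B1 B2 ≤ max (A1 - B1) (A2 - B2) := by
    intro A1 A2 B1 B2
    rw [sub_le_iff_le_add]
    apply max_le
    · calc A1 = (A1 - B1) + B1 := by ring
        _ ≤ max (A1 - B1) (A2 - B2) + max B1 B2 :=
          add_le_add (le_max_left _ _) (le_max_left _ _)
    · calc A2 = (A2 - B2) + B2 := by ring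
        _ ≤ max (A1 - B1) (A2 - B2) + max B1 B2 :=
          add_le_add (le_max_right _ _) (le_max_right _ _)
  -- Step 1: V is non-increasing on [0,1]
  have key1 : ∀ n : ℕ, ∀ a ∈ Set.Icc (0:ℝ) 1, ∀ b ∈ Set.Icc (0:ℝ) 1, a ≤ b →
      V b - V a ≤ β ^ n * (2 * C) := by
    intro n
    induction n with
    | zero =>
      intro a ha b hb _
      have h1 := abs_le.1 (hC a ha)
      have h2 := abs_le.1 (hC b hb)
      simp only [pow_zero, one_mul]
      linarith [h1.1, h2.2]
    | succ n ih =>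
      intro a ha b hb hab
      rw [hfix a ha, hfix b hb]
      unfold bellmanT
      have hTn : (0:ℝ) ≤ β ^ n * (2 * C) :=
        mul_nonneg (pow_nonneg hβ0.le n) (by linarith)
      have hgap : V μ0 - V μ1 ≤ β ^ n * (2 * C) := ih μ1 ⟨hμ1l, hμ1r⟩ μ0 ⟨hμ0l, hμ0r⟩ hμ
      have hba0 : (0:ℝ) ≤ b - a := by linarith
      have hba1 : b - a ≤ 1 := by
        obtain ⟨ha0, _⟩ := ha; obtain ⟨_, hb1⟩ := hb; linarith
      have h1 : ((1 - b) * r1 + β * ((1 - b) * V μ1 + b * V μ0)) -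
          ((1 - a) * r1 + β * ((1 - a) * V μ1 + a * V μ0)) ≤ β ^ (n + 1) * (2 * C) := by
        have e1 : (b - a) * (V μ0 - V μ1) ≤ β ^ n * (2 * C) := by
          nlinarith
        rw [pow_succ]
        nlinarith
      have h2 : (w + β * V (b * μ0 + (1 - b) * μ1)) -
          (w + β * V (a * μ0 + (1 - a) * μ1)) ≤ β ^ (n + 1) * (2 * C) := by
        have := ih _ (hΓmem a ha) _ (hΓmem b hb) (hΓmono a b hab)
        rw [pow_succ]
        nlinarith
      calc _ ≤ max (((1 - b) * r1 + β * ((1 - b) * V μ1 + b * V μ0)) -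
              ((1 - a) * r1 + β * ((1 - a) * V μ1 + a * V μ0)))
              ((w + β * V (b * μ0 + (1 - b) * μ1)) -
              (w + β * V (a * μ0 + (1 - a) * μ1))) := hmaxsub _ _ _ _
        _ ≤ _ := max_le h1 h2
  have htends : Filter.Tendsto (fun n : ℕ => β ^ n * (2 * C)) Filter.atTop (nhds 0) := by
    have := tendsto_pow_atTop_nhds_zero_of_lt_one hβ0.le hβ1
    simpa using this.mul_const (2 * C)
  have hmono : ∀ a ∈ Set.Icc (0:ℝ) 1, ∀ b ∈ Set.Icc (0:ℝ) 1, a ≤ b → V b ≤ V a := by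
    intro a ha b hb hab
    have : V b - V a ≤ 0 :=
      ge_of_tendsto htends (Filter.Eventually.of_forall fun n => key1 n a ha b hb hab)
    linarith
  -- Step 2: Lipschitz-type bound
  set K := r1 + β * (V μ1 - V μ0) with hKdef
  have hK : r1 ≤ K := by
    have := hmono μ1 ⟨hμ1l, hμ1r⟩ μ0 ⟨hμ0l, hμ0r⟩ hμ
    nlinarith
  have hKpos : 0 < K := lt_of_lt_of_le hr hK
  have key2 : ∀ n : ℕ, ∀ a ∈ Set.Icc (0:ℝ) 1, ∀ b ∈ Set.Icc (0:ℝ) 1, a ≤ b →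
      V a - V b ≤ K * (b - a) + β ^ n * (2 * C) := by
    intro n
    induction n with
    | zero =>
      intro a ha b hb hab
      have h1 := abs_le.1 (hC a ha)
      have h2 := abs_le.1 (hC b hb)
      simp only [pow_zero, one_mul]
      nlinarith [mul_nonneg hKpos.le (sub_nonneg.2 hab)]
    | succ n ih =>
      intro a ha b hb hab
      rw [hfix a ha, hfix b hb]
      unfold bellmanT
      have hba0 : (0:ℝ) ≤ b - a := by linarith
      have hTn : (0:ℝ) ≤ β ^ n * (2 * C) :=
        mul_nonneg (pow_nonneg hβ0.le n) (by linarith)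
      have h1 : ((1 - a) * r1 + β * ((1 - a) * V μ1 + a * V μ0)) -
          ((1 - b) * r1 + β * ((1 - b) * V μ1 + b * V μ0)) ≤
          K * (b - a) + β ^ (n + 1) * (2 * C) := by
        have : ((1 - a) * r1 + β * ((1 - a) * V μ1 + a * V μ0)) -
            ((1 - b) * r1 + β * ((1 - b) * V μ1 + b * V μ0)) = K * (b - a) := by
          rw [hKdef]; ring
        rw [this, pow_succ]
        nlinarith
      have h2 : (w + β * V (a * μ0 + (1 - a) * μ1)) -
          (w + β * V (b * μ0 + (1 - b) * μ1)) ≤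
          K * (b - a) + β ^ (n + 1) * (2 * C) := by
        have hΓgap : (b * μ0 + (1 - b) * μ1) - (a * μ0 + (1 - a) * μ1) = (b - a) * (μ0 - μ1) := by
          ring
        have hih := ih _ (hΓmem a ha) _ (hΓmem b hb) (hΓmono a b hab)
        rw [hΓgap] at hih
        rw [pow_succ]
        have e1 := mul_le_mul_of_nonneg_left hih hβ0.le
        have hmm : μ0 - μ1 ≤ 1 := by linarith
        have hβμ : β * (μ0 - μ1) ≤ 1 :=
          le_trans (mul_le_of_le_one_right hβ0.le hmm) hβ1.le
        have hP : (0:ℝ) ≤ K * (b - a) := mul_nonneg hKpos.le hba0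
        have e2 : β * (K * ((b - a) * (μ0 - μ1))) ≤ K * (b - a) := by
          calc β * (K * ((b - a) * (μ0 - μ1))) = (K * (b - a)) * (β * (μ0 - μ1)) := by ring
            _ ≤ (K * (b - a)) * 1 := mul_le_mul_of_nonneg_left hβμ hP
            _ = K * (b - a) := mul_one _
        nlinarith
      calc _ ≤ max _ _ := hmaxsub _ _ _ _
        _ ≤ _ := max_le h1 h2
  have hLip : ∀ a ∈ Set.Icc (0:ℝ) 1, ∀ b ∈ Set.Icc (0:ℝ) 1, a ≤ b →
      V a - V b ≤ K * (b - a) := by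
    intro a ha b hb hab
    have h := fun n => key2 n a ha b hb hab
    have : Filter.Tendsto (fun n : ℕ => K * (b - a) + β ^ n * (2 * C)) Filter.atTop
        (nhds (K * (b - a))) := by
      simpa using (tendsto_const_nhds.add htends)
    exact ge_of_tendsto this (Filter.Eventually.of_forall h)
  -- Conclusion
  intro a ha b hb hab
  simp only
  have hΓa := hΓmem a ha
  have hΓb := hΓmem b hb
  have hΓle := hΓmono a b hab.le
  have hL := hLip _ hΓa _ hΓb hΓle
  have hΓgap : (b * μ0 + (1 - b) * μ1) - (a * μ0 + (1 - a) * μ1) = (b - a) * (μ0 - μ1) := by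
    ring
  -- V Γa - V Γb ≤ K * (b-a) * (μ0-μ1)
  rw [hΓgap] at hL
  have hba : 0 < b - a := by linarith
  have hmm : μ0 - μ1 ≤ 1 := by linarith
  have hmm0 : 0 ≤ μ0 - μ1 := by linarith
  -- D a - D b = K*(b-a) - β*(V Γa - V Γb) ≥ K*(b-a)*(1 - β*(μ0-μ1)) > 0
  have hDdiff : (((1 - a) * r1 + β * ((1 - a) * V μ1 + a * V μ0)) -
      (w + β * V (a * μ0 + (1 - a) * μ1))) -
      ((((1 - b) * r1 + β * ((1 - b) * V μ1 + b * V μ0)) -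
      (w + β * V (b * μ0 + (1 - b) * μ1)))) =
      K * (b - a) - β * (V (a * μ0 + (1 - a) * μ1) - V (b * μ0 + (1 - b) * μ1)) := by
    rw [hKdef]; ring
  have hβμ : β * (μ0 - μ1) < 1 :=
    lt_of_le_of_lt (mul_le_of_le_one_right hβ0.le hmm) hβ1
  have hP : (0:ℝ) < K * (b - a) := mul_pos hKpos hba
  have h5 : β * (K * ((b - a) * (μ0 - μ1))) < K * (b - a) := by
    calc β * (K * ((b - a) * (μ0 - μ1))) = (K * (b - a)) * (β * (μ0 - μ1)) := by ring
      _ < (K * (b - a)) * 1 := by exact mul_lt_mul_of_pos_left hβμ hP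
      _ = K * (b - a) := mul_one _
  have h6 := mul_le_mul_of_nonneg_left hL hβ0.le
  linarith
end
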